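/- Let n ≥ 2, a, b > 0 and 0 < τ ≤ min{a, b}. There exists a constant C = C(n, τ) > 0 such that for any two distinct points P, Q ∈ ℝⁿ and every x ∈ ℝⁿ, one has ⟨x−P⟩^{-a} · ⟨x−Q⟩^{-b} ≤ C |P−Q|^{-τ} (⟨x−P⟩^{-(a+b−τ)} + ⟨x−Q⟩^{-(a+b−τ)}). -/
import Mathlib


open Real

/-- `⟨x⟩ := (1 + |x|²)^{1/2}`. -/
noncomputable def jap {n : ℕ} (x : EuclideanSpace ℝ (Fin n)) : ℝ :=
  Real.sqrt (1 + ‖x‖ ^ 2)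

lemma jap_ge_one {n : ℕ} (x : EuclideanSpace ℝ (Fin n)) : 1 ≤ jap x := by
  rw [jap]
  exact (Real.le_sqrt zero_le_one (by positivity)).mpr (by nlinarith [sq_nonneg ‖x‖])

lemma norm_le_jap {n : ℕ} (x : EuclideanSpace ℝ (Fin n)) : ‖x‖ ≤ jap x := by
  rw [jap]
  exact (Real.le_sqrt (norm_nonneg x) (by positivity)).mpr (by linarith)

/-- key estimate: if `1 ≤ p ≤ q` and `r ≤ 2 q`, `0 < r`, `0 < a`, `0 < τ ≤ b`, then
`p^{-a} q^{-b} ≤ 2^τ r^{-τ} p^{-(a+b-τ)}`. -/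
lemma key_est (a b τ p q r : ℝ) (ha : 0 < a) (hτ0 : 0 < τ) (hτb : τ ≤ b)
    (hp : 1 ≤ p) (hpq : p ≤ q) (hr : 0 < r) (hrq : r ≤ 2 * q) :
    p ^ (-a) * q ^ (-b) ≤ 2 ^ τ * r ^ (-τ) * p ^ (-(a + b - τ)) := by
  have hp0 : (0:ℝ) < p := lt_of_lt_of_le one_pos hp
  have hq0 : (0:ℝ) < q := lt_of_lt_of_le hp0 hpq
  have h1 : q ^ (-b) = q ^ (-(b - τ)) * q ^ (-τ) := by
    rw [← Real.rpow_add hq0]; ring_nf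
  have h2 : q ^ (-(b - τ)) ≤ p ^ (-(b - τ)) :=
    Real.rpow_le_rpow_of_nonpos hp0 hpq (by linarith)
  have h3 : q ^ (-τ) ≤ (r / 2) ^ (-τ) :=
    Real.rpow_le_rpow_of_nonpos (by positivity) (by linarith) (by linarith)
  have h4 : (r / 2) ^ (-τ) = 2 ^ τ * r ^ (-τ) := by
    rw [Real.div_rpow hr.le (by norm_num), Real.rpow_neg hr.le,
      Real.rpow_neg (by norm_num : (0:ℝ) ≤ 2)]
    field_simp
  have h5 : p ^ (-a) * p ^ (-(b - τ)) = p ^ (-(a + b - τ)) := by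
    rw [← Real.rpow_add hp0]; ring_nf
  calc p ^ (-a) * q ^ (-b) = p ^ (-a) * (q ^ (-(b - τ)) * q ^ (-τ)) := by rw [h1]
    _ ≤ p ^ (-a) * (p ^ (-(b - τ)) * ((r / 2) ^ (-τ))) := by
        apply mul_le_mul_of_nonneg_left _ (by positivity)
        exact mul_le_mul h2 h3 (by positivity) (by positivity)
    _ = 2 ^ τ * r ^ (-τ) * p ^ (-(a + b - τ)) := by rw [h4, ← h5]; ring

/-- Let `n ≥ 2`, `a, b > 0` and `0 < τ ≤ min{a, b}`. There exists `C = C(n, τ) > 0`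
such that for any two distinct points `P, Q ∈ ℝⁿ` and every `x ∈ ℝⁿ`,
`⟨x−P⟩^{-a} ⟨x−Q⟩^{-b} ≤ C |P−Q|^{-τ} (⟨x−P⟩^{-(a+b−τ)} + ⟨x−Q⟩^{-(a+b−τ)})`. -/
theorem stmt0 (n : ℕ) (hn : 2 ≤ n) (a b τ : ℝ) (ha : 0 < a) (hb : 0 < b)
    (hτ0 : 0 < τ) (hτ : τ ≤ min a b) :
    ∃ C : ℝ, 0 < C ∧ ∀ P Q : EuclideanSpace ℝ (Fin n), P ≠ Q →
      ∀ x : EuclideanSpace ℝ (Fin n),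
        jap (x - P) ^ (-a) * jap (x - Q) ^ (-b) ≤
          C * ‖P - Q‖ ^ (-τ) *
            (jap (x - P) ^ (-(a + b - τ)) + jap (x - Q) ^ (-(a + b - τ))) := by
  refine ⟨2 ^ τ, by positivity, fun P Q hPQ x => ?_⟩
  set p := jap (x - P) with hpdef
  set q := jap (x - Q) with hqdef
  have hp1 : 1 ≤ p := jap_ge_one _
  have hq1 : 1 ≤ q := jap_ge_one _
  have hp0 : (0:ℝ) < p := lt_of_lt_of_le one_pos hp1
  have hq0 : (0:ℝ) < q := lt_of_lt_of_le one_pos hq1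
  have hr0 : (0:ℝ) < ‖P - Q‖ := by
    rw [norm_pos_iff]; exact sub_ne_zero_of_ne hPQ
  have hrpq : ‖P - Q‖ ≤ p + q := by
    calc ‖P - Q‖ = ‖(x - Q) - (x - P)‖ := by congr 1; abel
      _ ≤ ‖x - Q‖ + ‖x - P‖ := norm_sub_le _ _
      _ ≤ q + p := add_le_add (norm_le_jap _) (norm_le_jap _)
      _ = p + q := by ring
  have hterm : 0 ≤ (2:ℝ) ^ τ * ‖P - Q‖ ^ (-τ) := by positivity
  rcases le_total p q with h | h
  · have := key_est a b τ p q ‖P - Q‖ ha hτ0 (le_trans hτ (min_le_right a b)) hp1 h hr0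
      (by linarith)
    calc p ^ (-a) * q ^ (-b) ≤ 2 ^ τ * ‖P - Q‖ ^ (-τ) * p ^ (-(a + b - τ)) := this
      _ ≤ 2 ^ τ * ‖P - Q‖ ^ (-τ) * (p ^ (-(a + b - τ)) + q ^ (-(a + b - τ))) := by
          apply mul_le_mul_of_nonneg_left _ hterm
          have : (0:ℝ) ≤ q ^ (-(a + b - τ)) := by positivity
          linarith
  · have := key_est b a τ q p ‖P - Q‖ hb hτ0 (le_trans hτ (min_le_left a b)) hq1 h hr0
      (by linarith)
    calc p ^ (-a) * q ^ (-b) = q ^ (-b) * p ^ (-a) := by ring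
      _ ≤ 2 ^ τ * ‖P - Q‖ ^ (-τ) * q ^ (-(b + a - τ)) := this
      _ = 2 ^ τ * ‖P - Q‖ ^ (-τ) * q ^ (-(a + b - τ)) := by ring_nf
      _ ≤ 2 ^ τ * ‖P - Q‖ ^ (-τ) * (p ^ (-(a + b - τ)) + q ^ (-(a + b - τ))) := by
          apply mul_le_mul_of_nonneg_left _ hterm
          have : (0:ℝ) ≤ p ^ (-(a + b - τ)) := by positivity
          linarith
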